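/- Assume ‖∇L(Θ*)‖_{∞,∞} ≤ λ/2, and let Θ̂ be a global minimizer over ℝ^{m×d} of the objective Θ ↦ L(Θ) + λ‖Θ‖_{1,1}. Then for every column index 1 ≤ j ≤ d, the error vector Δ_j = Θ̂_{·,j} − Θ*_{·,j} satisfies the ℓ1-cone condition ∑_{i ∉ S_j} |Δ_j(i)| ≤ 3 ∑_{i ∈ S_j} |Δ_j(i)|. -/

import Mathlib

open Matrix Finset

/-- ℓ1-cone condition: if `‖∇L(Θ*)‖_{∞,∞} ≤ λ/2` and `Θ̂` is a global minimizer of the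
lasso-type objective `Θ ↦ L(Θ) + λ‖Θ‖_{1,1}` with `L(Θ) = (1/(2T))‖Y − XΘ‖_F²`, then for
every column `j` the error `Δⱼ = Θ̂_{·,j} − Θ*_{·,j}` satisfies
`∑_{i ∉ Sⱼ} |Δⱼ(i)| ≤ 3 ∑_{i ∈ Sⱼ} |Δⱼ(i)|`, where `Sⱼ = {i : Θ*_{i,j} ≠ 0}`. -/
theorem ell1_cone (T m d : ℕ) (hT : 0 < T) (hm : 0 < m) (hd : 0 < d)
    (Y : Matrix (Fin T) (Fin d) ℝ) (X : Matrix (Fin T) (Fin m) ℝ)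
    (lam : ℝ) (hlam : 0 < lam)
    (Θstar Θhat : Matrix (Fin m) (Fin d) ℝ)
    (hgrad : ∀ (i : Fin m) (j : Fin d),
      |((1 / (T : ℝ)) • (Xᵀ * (X * Θstar - Y))) i j| ≤ lam / 2)
    (hmin : ∀ Θ : Matrix (Fin m) (Fin d) ℝ,
      (1 / (2 * (T : ℝ))) * (∑ t, ∑ j, (Y t j - (X * Θhat) t j) ^ 2)
          + lam * ∑ i, ∑ j, |Θhat i j|
        ≤ (1 / (2 * (T : ℝ))) * (∑ t, ∑ j, (Y t j - (X * Θ) t j) ^ 2)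
          + lam * ∑ i, ∑ j, |Θ i j|) :
    ∀ j : Fin d,
      ∑ i ∈ Finset.univ.filter (fun i : Fin m => Θstar i j = 0), |Θhat i j - Θstar i j|
        ≤ 3 * ∑ i ∈ Finset.univ.filter (fun i : Fin m => Θstar i j ≠ 0),
            |Θhat i j - Θstar i j| := by
  intro j
  classical
  set Δ : Fin m → ℝ := fun i => Θhat i j - Θstar i j with hΔ
  -- the candidate matrix: Θhat with column j replaced by Θstar's column j
  set Θ' : Matrix (Fin m) (Fin d) ℝ :=
    fun i j' => if j' = j then Θstar i j' else Θhat i j' with hΘ'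
  have hmin' := hmin Θ'
  set c : ℝ := 1 / (2 * (T : ℝ)) with hc
  have hcpos : 0 < c := by
    have : (0:ℝ) < (T:ℝ) := by exact_mod_cast hT
    positivity
  -- abbreviations
  set A : ℝ := ∑ t, (Y t j - (X * Θstar) t j) ^ 2 with hA
  set B : ℝ := ∑ t, (Y t j - (X * Θhat) t j) ^ 2 with hB
  set ahat : ℝ := ∑ i, |Θhat i j| with hahat
  set astar : ℝ := ∑ i, |Θstar i j| with hastar
  -- X * Θ' agrees with X * Θstar at column j and X * Θhat elsewhere
  have hXΘ' : ∀ t j', (X * Θ') t j' =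
      if j' = j then (X * Θstar) t j' else (X * Θhat) t j' := by
    intro t j'
    by_cases h : j' = j <;> simp only [Matrix.mul_apply] <;> simp [hΘ', h]
  -- key per-column inequality
  have key : c * B + lam * ahat ≤ c * A + lam * astar := by
    have e1 : ∀ (M : Matrix (Fin T) (Fin d) ℝ),
        (∑ t, ∑ j', (Y t j' - M t j') ^ 2)
          = (∑ t, ∑ j' ∈ univ.erase j, (Y t j' - M t j') ^ 2)
            + ∑ t, (Y t j - M t j) ^ 2 := by
      intro M
      rw [← Finset.sum_add_distrib]
      refine Finset.sum_congr rfl fun t _ => ?_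
      rw [Finset.sum_erase_add univ _ (mem_univ j)]
    have e2 : ∀ (N : Matrix (Fin m) (Fin d) ℝ),
        (∑ i, ∑ j', |N i j'|)
          = (∑ i, ∑ j' ∈ univ.erase j, |N i j'|) + ∑ i, |N i j| := by
      intro N
      rw [← Finset.sum_add_distrib]
      refine Finset.sum_congr rfl fun i _ => ?_
      rw [Finset.sum_erase_add univ _ (mem_univ j)]
    rw [e1, e1, e2, e2] at hmin'
    have eq1 : (∑ t, ∑ j' ∈ univ.erase j, (Y t j' - (X * Θ') t j') ^ 2)
        = ∑ t, ∑ j' ∈ univ.erase j, (Y t j' - (X * Θhat) t j') ^ 2 := by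
      refine Finset.sum_congr rfl fun t _ => Finset.sum_congr rfl fun j' hj' => ?_
      rw [hXΘ', if_neg (Finset.ne_of_mem_erase hj')]
    have eq2 : (∑ t, (Y t j - (X * Θ') t j) ^ 2) = A := by
      refine Finset.sum_congr rfl fun t _ => ?_
      rw [hXΘ', if_pos rfl]
    have eq3 : (∑ i, ∑ j' ∈ univ.erase j, |Θ' i j'|)
        = ∑ i, ∑ j' ∈ univ.erase j, |Θhat i j'| := by
      refine Finset.sum_congr rfl fun i _ => Finset.sum_congr rfl fun j' hj' => ?_
      rw [hΘ']
      simp [Finset.ne_of_mem_erase hj']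
    have eq4 : (∑ i, |Θ' i j|) = astar := by
      refine Finset.sum_congr rfl fun i _ => ?_
      rw [hΘ']; simp
    rw [eq1, eq2, eq3, eq4] at hmin'
    rw [mul_add, mul_add, mul_add, mul_add] at hmin'
    linarith
  -- quadratic expansion
  set e : Fin T → ℝ := fun t => (X * Θstar) t j - Y t j with he
  set u : Fin T → ℝ := fun t => ∑ k, X t k * Δ k with hu
  have hXhat : ∀ t, (X * Θhat) t j = (X * Θstar) t j + u t := by
    intro t
    simp only [Matrix.mul_apply, hu, hΔ, mul_sub, Finset.sum_sub_distrib]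
    ring
  have hBexp : B = A + 2 * (∑ t, e t * u t) + ∑ t, (u t) ^ 2 := by
    have hterm : ∀ t, (Y t j - (X * Θhat) t j) ^ 2
        = (Y t j - (X * Θstar) t j) ^ 2 + 2 * (e t * u t) + (u t) ^ 2 := by
      intro t
      rw [hXhat t, he]
      ring
    calc B = ∑ t, ((Y t j - (X * Θstar) t j) ^ 2 + 2 * (e t * u t) + (u t) ^ 2) :=
          Finset.sum_congr rfl fun t _ => hterm t
      _ = A + 2 * (∑ t, e t * u t) + ∑ t, (u t) ^ 2 := by
          rw [Finset.sum_add_distrib, Finset.sum_add_distrib, ← Finset.mul_sum]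
  -- gradient identity
  set g : Fin m → ℝ := fun i => ((1 / (T : ℝ)) • (Xᵀ * (X * Θstar - Y))) i j with hg
  have hgid : (∑ i, g i * Δ i) = (1 / (T : ℝ)) * ∑ t, e t * u t := by
    simp only [hg, he, hu, Matrix.smul_apply, Matrix.mul_apply, Matrix.transpose_apply,
      Matrix.sub_apply, smul_eq_mul]
    simp only [Finset.sum_mul, Finset.mul_sum]
    rw [Finset.sum_comm]
    refine Finset.sum_congr rfl fun t _ => Finset.sum_congr rfl fun i _ => ?_
    ring
  -- c * (B - A) = (1/T) Σ e u + c Σ u², and c = 1/(2T)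
  have hTpos : (0:ℝ) < (T : ℝ) := by exact_mod_cast hT
  have hcT : 2 * c = 1 / (T : ℝ) := by
    rw [hc]; field_simp
  have husq : 0 ≤ ∑ t, (u t) ^ 2 := Finset.sum_nonneg fun t _ => sq_nonneg _
  have hgbound : -(∑ i, g i * Δ i) ≤ (lam / 2) * ∑ i, |Δ i| := by
    calc -(∑ i, g i * Δ i) ≤ |∑ i, g i * Δ i| := neg_le_abs _
      _ ≤ ∑ i, |g i * Δ i| := Finset.abs_sum_le_sum_abs _ _
      _ ≤ ∑ i, (lam / 2) * |Δ i| := by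
          refine Finset.sum_le_sum fun i _ => ?_
          rw [abs_mul]
          exact mul_le_mul_of_nonneg_right (hgrad i j) (abs_nonneg _)
      _ = (lam / 2) * ∑ i, |Δ i| := by rw [Finset.mul_sum]
  -- from key: lam * ahat ≤ lam * astar + (lam/2) * Σ |Δ|
  have key2 : lam * ahat ≤ lam * astar + (lam / 2) * ∑ i, |Δ i| := by
    have h1 : c * B - c * A = 2 * c * (∑ t, e t * u t) + c * ∑ t, (u t) ^ 2 := by
      rw [hBexp]; ring
    rw [hcT, ← hgid] at h1
    nlinarith [mul_nonneg hcpos.le husq]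
  -- split sums over the support
  set S : Finset (Fin m) := univ.filter (fun i => Θstar i j ≠ 0) with hS
  set Sc : Finset (Fin m) := univ.filter (fun i => Θstar i j = 0) with hSc
  have hsplit : ∀ f : Fin m → ℝ, (∑ i, f i) = (∑ i ∈ S, f i) + ∑ i ∈ Sc, f i := by
    intro f
    rw [hS, hSc, ← Finset.sum_filter_add_sum_filter_not univ (fun i => Θstar i j ≠ 0) f]
    congr 1
    apply Finset.sum_congr _ fun _ _ => rfl
    apply Finset.filter_congr
    intro i _
    simp [not_not]
  have hDabs : 0 ≤ ∑ i ∈ S, |Δ i| := Finset.sum_nonneg fun i _ => abs_nonneg _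
  have hastar_eq : astar = ∑ i ∈ S, |Θstar i j| := by
    rw [hastar, hsplit]
    have : (∑ i ∈ Sc, |Θstar i j|) = 0 := by
      refine Finset.sum_eq_zero fun i hi => ?_
      rw [hSc] at hi
      simp at hi
      simp [hi]
    rw [this, add_zero]
  have hahat_eq : ahat = (∑ i ∈ S, |Θhat i j|) + ∑ i ∈ Sc, |Δ i| := by
    rw [hahat, hsplit]
    congr 1
    refine Finset.sum_congr rfl fun i hi => ?_
    rw [hSc] at hi
    simp at hi
    rw [hΔ]
    simp [hi]
  have htri : (∑ i ∈ S, |Θstar i j|) ≤ (∑ i ∈ S, |Θhat i j|) + ∑ i ∈ S, |Δ i| := by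
    rw [← Finset.sum_add_distrib]
    refine Finset.sum_le_sum fun i _ => ?_
    have : Θstar i j = Θhat i j - Δ i := by rw [hΔ]; ring
    rw [this]
    exact (abs_sub _ _)
  -- conclude
  have hΔsplit : (∑ i, |Δ i|) = (∑ i ∈ S, |Δ i|) + ∑ i ∈ Sc, |Δ i| := hsplit _
  rw [hahat_eq, hastar_eq] at key2
  rw [hΔsplit] at key2
  have final : (∑ i ∈ Sc, |Δ i|) ≤ 3 * ∑ i ∈ S, |Δ i| := by
    nlinarith [key2, htri, hlam, hDabs]
  exact final
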